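/- Let R₁ ∈ k(x)^{m×p} and R₂ ∈ k(x)^{p×h} be rational matrices and R = R₁R₂. Then for every ℓ ≥ 0, φ_ℓ(R) divides φ_ℓ(R₁)·φ_ℓ(R₂). -/

import Mathlib

open Polynomial

/-! ### Auxiliary lemmas towards Cauchy–Binet -/

theorem cbStep1 {R : Type*} [CommRing R] {s p : ℕ}
    (A : Matrix (Fin s) (Fin p) R) (B : Matrix (Fin p) (Fin s) R) :
    (A * B).det = ∑ f : Fin s → Fin p, (∏ i, A i (f i)) * (B.submatrix f id).det := by
  have hAB : (A * B) = fun i => ∑ j, A i j • B j := by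
    ext i k
    simp [Matrix.mul_apply, Finset.sum_apply]
  have h0 : (A * B).det
      = (Matrix.detRowAlternating : (Fin s → R) [⋀^Fin s]→ₗ[R] R).toMultilinearMap
          (fun i => ∑ j, A i j • B j) := by
    rw [← hAB]; rfl
  rw [h0, MultilinearMap.map_sum]
  refine Finset.sum_congr rfl fun f _ => ?_
  have h1 := (Matrix.detRowAlternating : (Fin s → R) [⋀^Fin s]→ₗ[R] R).toMultilinearMap.map_smul_univ
    (fun i => A i (f i)) (fun i => B (f i))
  rw [h1, smul_eq_mul]
  rfl

theorem cbStep2 {R : Type*} [CommRing R] {s p : ℕ}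
    (A : Matrix (Fin s) (Fin p) R) (B : Matrix (Fin p) (Fin s) R) :
    ∑ f : Fin s → Fin p, (∏ i, A i (f i)) * (B.submatrix f id).det
      = ∑ f ∈ Finset.univ.filter (fun f : Fin s → Fin p => Function.Injective f),
          (∏ i, A i (f i)) * (B.submatrix f id).det := by
  refine (Finset.sum_filter_of_ne fun f _ hne => ?_).symm
  by_contra hinj
  apply hne
  rw [Function.not_injective_iff] at hinj
  obtain ⟨i, j, hfij, hij⟩ := hinj
  have : (B.submatrix f id).det = 0 := by
    apply Matrix.det_zero_of_row_eq hij
    funext kk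
    simp [Matrix.submatrix_apply, hfij]
  rw [this, mul_zero]

theorem cbInner {R : Type*} [CommRing R] {s p : ℕ}
    (A : Matrix (Fin s) (Fin p) R) (B : Matrix (Fin p) (Fin s) R) (g : Fin s → Fin p) :
    ∑ σ : Equiv.Perm (Fin s), (∏ i, A i (g (σ i))) * (B.submatrix (g ∘ σ) id).det
      = (A.submatrix id g).det * (B.submatrix g id).det := by
  have hperm : ∀ σ : Equiv.Perm (Fin s),
      (B.submatrix (g ∘ σ) id).det = Equiv.Perm.sign σ * (B.submatrix g id).det := by
    intro σ
    have : B.submatrix (g ∘ σ) id = (B.submatrix g id).submatrix σ id := rfl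
    rw [this, Matrix.det_permute]
  have hA : (A.submatrix id g).det
      = ∑ σ : Equiv.Perm (Fin s), (Equiv.Perm.sign σ : ℤ) • ∏ i, A i (g (σ i)) := by
    rw [← Matrix.det_transpose, Matrix.det_apply]
    rfl
  rw [hA, Finset.sum_mul]
  refine Finset.sum_congr rfl fun σ _ => ?_
  rw [hperm σ, zsmul_eq_mul]
  ring

theorem cbCardImage {s p : ℕ} {f : Fin s → Fin p} (hf : Function.Injective f) :
    (Finset.image f Finset.univ).card = s := by
  rw [Finset.card_image_of_injective _ hf, Finset.card_univ, Fintype.card_fin]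

noncomputable def cbPermOf {s p : ℕ} (f : Fin s → Fin p) (hf : Function.Injective f) :
    Equiv.Perm (Fin s) :=
  Equiv.ofBijective
    (fun i => ((Finset.image f Finset.univ).orderIsoOfFin (cbCardImage hf)).symm
        ⟨f i, Finset.mem_image_of_mem f (Finset.mem_univ i)⟩)
    (by
      rw [← Finite.injective_iff_bijective]
      intro a b hab
      apply hf
      have := congrArg (((Finset.image f Finset.univ).orderIsoOfFin (cbCardImage hf))) hab
      simp only [OrderIso.apply_symm_apply] at this
      exact congrArg Subtype.val this)

theorem cbPermOf_spec {s p : ℕ} (f : Fin s → Fin p) (hf : Function.Injective f) (i : Fin s) :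
    (Finset.image f Finset.univ).orderEmbOfFin (cbCardImage hf) (cbPermOf f hf i) = f i := by
  rw [← Finset.coe_orderIsoOfFin_apply]
  show (((Finset.image f Finset.univ).orderIsoOfFin (cbCardImage hf))
    (((Finset.image f Finset.univ).orderIsoOfFin (cbCardImage hf)).symm _) : Fin p) = f i
  rw [OrderIso.apply_symm_apply]

theorem cbImageOrderEmbOfFin {p s : ℕ} (S : Finset (Fin p)) (hS : S.card = s) :
    Finset.image (S.orderEmbOfFin hS) Finset.univ = S := by
  ext x
  simp only [Finset.mem_image, Finset.mem_univ, true_and]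
  constructor
  · rintro ⟨i, rfl⟩; exact Finset.orderEmbOfFin_mem S hS i
  · intro hx
    have : x ∈ Set.range (S.orderEmbOfFin hS) := by
      rw [Finset.range_orderEmbOfFin]; exact hx
    exact this

theorem cbStep3 {R : Type*} [CommRing R] {s p : ℕ} (T : (Fin s → Fin p) → R) :
    ∑ f ∈ Finset.univ.filter (fun f : Fin s → Fin p => Function.Injective f), T f
      = ∑ q : {S : Finset (Fin p) // S.card = s} × Equiv.Perm (Fin s),
          T (fun i => q.1.1.orderEmbOfFin q.1.2 (q.2 i)) := by
  refine Finset.sum_bij'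
    (i := fun f hf => (⟨Finset.image f Finset.univ,
        cbCardImage ((Finset.mem_filter.mp hf).2)⟩,
        cbPermOf f (Finset.mem_filter.mp hf).2))
    (j := fun q _ => fun i => q.1.1.orderEmbOfFin q.1.2 (q.2 i))
    (fun _ _ => Finset.mem_univ _) ?_ ?_ ?_ ?_
  · intro q _
    rw [Finset.mem_filter]
    refine ⟨Finset.mem_univ _, ?_⟩
    intro a b hab
    exact q.2.injective ((q.1.1.orderEmbOfFin q.1.2).injective hab)
  · intro f hf
    funext i
    exact cbPermOf_spec f (Finset.mem_filter.mp hf).2 i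
  · intro q _
    set g : Fin s → Fin p := fun i => q.1.1.orderEmbOfFin q.1.2 (q.2 i) with hg
    have hginj : Function.Injective g := fun a b hab =>
      q.2.injective ((q.1.1.orderEmbOfFin q.1.2).injective hab)
    have himg : Finset.image g Finset.univ = q.1.1 := by
      rw [hg]
      have : Finset.image (fun i => q.1.1.orderEmbOfFin q.1.2 (q.2 i)) Finset.univ
          = Finset.image (q.1.1.orderEmbOfFin q.1.2) (Finset.image q.2 Finset.univ) := by
        rw [Finset.image_image]; rfl
      rw [this, Finset.image_univ_equiv, cbImageOrderEmbOfFin]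
    have hemb : ⇑((Finset.image g Finset.univ).orderEmbOfFin (cbCardImage hginj))
        = ⇑(q.1.1.orderEmbOfFin q.1.2) := by
      refine Finset.orderEmbOfFin_unique q.1.2 ?_
        ((Finset.image g Finset.univ).orderEmbOfFin (cbCardImage hginj)).strictMono
      intro x
      rw [← himg]
      exact Finset.orderEmbOfFin_mem _ _ x
    refine Prod.ext (Subtype.ext himg) (Equiv.ext fun i => ?_)
    apply (q.1.1.orderEmbOfFin q.1.2).injective
    have h1 := cbPermOf_spec g hginj i
    rw [hemb] at h1
    exact h1
  · intro f hf
    apply congrArg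
    funext i
    exact (cbPermOf_spec f (Finset.mem_filter.mp hf).2 i).symm

/-- **Cauchy–Binet formula**. -/
theorem cauchyBinet {R : Type*} [CommRing R] {s p : ℕ}
    (A : Matrix (Fin s) (Fin p) R) (B : Matrix (Fin p) (Fin s) R) :
    (A * B).det = ∑ S : {S : Finset (Fin p) // S.card = s},
      (A.submatrix id (S.1.orderEmbOfFin S.2)).det * (B.submatrix (S.1.orderEmbOfFin S.2) id).det := by
  rw [cbStep1, cbStep2,
    cbStep3 (T := fun f => (∏ i, A i (f i)) * (B.submatrix f id).det),
    Fintype.sum_prod_type]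
  refine Finset.sum_congr rfl fun S _ => ?_
  exact cbInner A B (S.1.orderEmbOfFin S.2)

theorem denom_sum_dvd' {k : Type*} [Field k] {ι : Type*} (s : Finset ι) (x : ι → RatFunc k)
    {D : k[X]}
    (h : ∀ i ∈ s, ∃ a : k[X], x i = algebraMap _ _ a / algebraMap _ _ D) :
    ∃ a : k[X], (∑ i ∈ s, x i) = algebraMap _ _ a / algebraMap _ _ D := by
  classical
  induction s using Finset.induction with
  | empty => exact ⟨0, by simp⟩
  | insert _ _ hnot ih =>
    rename_i j t
    obtain ⟨a, ha⟩ := h j (Finset.mem_insert_self j t)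
    obtain ⟨b, hb⟩ := ih fun i hi => h i (Finset.mem_insert_of_mem hi)
    refine ⟨a + b, ?_⟩
    rw [Finset.sum_insert hnot, ha, hb, map_add, add_div]

/-- The determinantal denominator `φ_ℓ(R)`: the monic least common denominator in `k[x]`
of all minors of the rational matrix `R` of size at most `ℓ` (with `φ_0(R) = 1`). -/
noncomputable def detDen {k : Type*} [Field k] [DecidableEq k] {m p : ℕ} (ℓ : ℕ)
    (R : Matrix (Fin m) (Fin p) (RatFunc k)) : Polynomial k :=
  (Finset.univ : Finset (Σ s : Fin (ℓ + 1), (Fin (s : ℕ) → Fin m) × (Fin (s : ℕ) → Fin p))).lcm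
    (fun t => ((R.submatrix t.2.1 t.2.2).det).denom)

theorem detDen_minor_dvd {k : Type*} [Field k] [DecidableEq k] {m p : ℕ} (ℓ : ℕ)
    (R : Matrix (Fin m) (Fin p) (RatFunc k))
    (t : Σ s : Fin (ℓ + 1), (Fin (s : ℕ) → Fin m) × (Fin (s : ℕ) → Fin p)) :
    ((R.submatrix t.2.1 t.2.2).det).denom ∣ detDen ℓ R := by
  unfold detDen
  exact Finset.dvd_lcm (Finset.mem_univ t)

theorem detDen_ne_zero {k : Type*} [Field k] [DecidableEq k] {m p : ℕ} (ℓ : ℕ)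
    (R : Matrix (Fin m) (Fin p) (RatFunc k)) : detDen ℓ R ≠ 0 := by
  unfold detDen
  rw [Ne, Finset.lcm_eq_zero_iff]
  rintro ⟨t, -, h⟩
  exact RatFunc.denom_ne_zero _ h

/-- Determinantal denominators of a product: φ_ℓ(R₁R₂) divides φ_ℓ(R₁)·φ_ℓ(R₂). -/
theorem detDen_mul (k : Type*) [Field k] [DecidableEq k] (m p h : ℕ)
    (R₁ : Matrix (Fin m) (Fin p) (RatFunc k)) (R₂ : Matrix (Fin p) (Fin h) (RatFunc k)) (ℓ : ℕ) :
    detDen ℓ (R₁ * R₂) ∣ detDen ℓ R₁ * detDen ℓ R₂ := by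
  have hφ₁ : detDen ℓ R₁ ≠ 0 := detDen_ne_zero ℓ R₁
  have hφ₂ : detDen ℓ R₂ ≠ 0 := detDen_ne_zero ℓ R₂
  apply Finset.lcm_dvd
  intro t _
  rw [RatFunc.denom_dvd (mul_ne_zero hφ₁ hφ₂)]
  obtain ⟨sF, r, c⟩ := t
  have hsub : (R₁ * R₂).submatrix r c = (R₁.submatrix r id) * (R₂.submatrix id c) :=
    Matrix.submatrix_mul R₁ R₂ r id c Function.bijective_id
  rw [hsub, cauchyBinet]
  apply denom_sum_dvd'
  intro S _
  have hA : (R₁.submatrix r id).submatrix id (S.1.orderEmbOfFin S.2)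
      = R₁.submatrix r (S.1.orderEmbOfFin S.2) := by
    rw [Matrix.submatrix_submatrix]
    rfl
  have hB : (R₂.submatrix id c).submatrix (S.1.orderEmbOfFin S.2) id
      = R₂.submatrix (S.1.orderEmbOfFin S.2) c := by
    rw [Matrix.submatrix_submatrix]
    rfl
  have hdA : ((R₁.submatrix r (S.1.orderEmbOfFin S.2)).det).denom ∣ detDen ℓ R₁ :=
    detDen_minor_dvd ℓ R₁ ⟨sF, (r, ⇑(S.1.orderEmbOfFin S.2))⟩
  have hdB : ((R₂.submatrix (S.1.orderEmbOfFin S.2) c).det).denom ∣ detDen ℓ R₂ :=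
    detDen_minor_dvd ℓ R₂ ⟨sF, (⇑(S.1.orderEmbOfFin S.2), c)⟩
  obtain ⟨a, ha⟩ := (RatFunc.denom_dvd hφ₁).mp hdA
  obtain ⟨b, hb⟩ := (RatFunc.denom_dvd hφ₂).mp hdB
  refine ⟨a * b, ?_⟩
  rw [hA, hB, ha, hb, div_mul_div_comm, ← map_mul, ← map_mul]
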